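/- Let H be a chain graph and U, L ∈ C_H form a meta-arrow U ⇒ L. Then merging of U ⇒ L is feasible if and only if pa_H(L) is a clique in the closure graph clo_H(U). Moreover, if merging is feasible and H' is the resulting graph with merged chain component M, then pa_H(L) is a clique in clo_{H'}(M). -/

import Mathlib

open scoped Classical BigOperators

variable {V : Type} [Fintype V] [DecidableEq V]

/-! ### Imsets -/

abbrev Imset (V : Type) := Finset V → ℤ

noncomputable def deltaIm (A : Finset V) : Imset V := fun B => if B = A then 1 else 0

noncomputable def semiElem (A B C : Finset V) : Imset V :=
  deltaIm (A ∪ B ∪ C) + deltaIm C - deltaIm (A ∪ C) - deltaIm (B ∪ C)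

def ElemValid (a b : V) (C : Finset V) : Prop := a ≠ b ∧ a ∉ C ∧ b ∉ C

noncomputable def elemOf (t : V × V × Finset V) : Imset V :=
  semiElem {t.1} {t.2.1} t.2.2

/-- A combinatorial imset: a nonnegative integer combination of elementary imsets. -/
def IsCombinatorial (u : Imset V) : Prop :=
  ∃ n : V × V × Finset V → ℕ,
    (∀ t, n t ≠ 0 → ElemValid t.1 t.2.1 t.2.2) ∧
    u = ∑ t : V × V × Finset V, (n t : ℤ) • elemOf t

/-- A structural imset: an (integer-valued) element of the convex cone
generated by the elementary imsets. -/
def IsStructural (u : Imset V) : Prop :=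
  ∃ c : V × V × Finset V → ℝ,
    (∀ t, 0 ≤ c t) ∧ (∀ t, c t ≠ 0 → ElemValid t.1 t.2.1 t.2.2) ∧
    ∀ A : Finset V, (u A : ℝ) = ∑ t : V × V × Finset V, c t * ((elemOf t) A : ℝ)

def DisjointTriple (A B C : Finset V) : Prop :=
  Disjoint A B ∧ Disjoint A C ∧ Disjoint B C

/-- The conditional independence statement induced by a (structural) imset. -/
def imsetCI (u : Imset V) (A B C : Finset V) : Prop :=
  ∃ k : ℕ, IsStructural ((k : ℤ) • u - semiElem A B C)

/-! ### Undirected graph notions, relative to a vertex set `W` -/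

def WalkIn (W : Finset V) {G : SimpleGraph V} {u v : V} (p : G.Walk u v) : Prop :=
  ∀ x ∈ p.support, x ∈ W

/-- `C` separates `A` from `B` in the subgraph of `G` induced on `W`. -/
def SeparatesIn (G : SimpleGraph V) (W A B C : Finset V) : Prop :=
  ∀ a ∈ A, ∀ b ∈ B, ∀ p : G.Walk a b, WalkIn W p → ∃ c ∈ C, c ∈ p.support

/-- The subgraph of `G` induced on `W` is chordal: every cycle of length ≥ 4 within `W`
has a chord. -/
def ChordalIn (G : SimpleGraph V) (W : Finset V) : Prop :=
  ∀ (v : V) (p : G.Walk v v), p.IsCycle → WalkIn W p → 4 ≤ p.length →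
    ∃ a b, a ∈ p.support ∧ b ∈ p.support ∧ G.Adj a b ∧ s(a, b) ∉ p.edges

def EdgesWithin (G : SimpleGraph V) (W : Finset V) : Prop :=
  ∀ a b, G.Adj a b → a ∈ W ∧ b ∈ W

/-- `G` is a triangulation of (the subgraph of) `H` (induced on `W`): a decomposable
(chordal) graph on the vertex set `W` containing all the edges of `H` within `W`. -/
def IsTriangulationIn (H : SimpleGraph V) (W : Finset V) (G : SimpleGraph V) : Prop :=
  EdgesWithin G W ∧ (∀ a b, H.Adj a b → a ∈ W → b ∈ W → G.Adj a b) ∧ ChordalIn G W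

/-- A minimal triangulation: no triangulation has a strictly smaller edge set. -/
def IsMinTriIn (H : SimpleGraph V) (W : Finset V) (G : SimpleGraph V) : Prop :=
  IsTriangulationIn H W G ∧ ∀ G', IsTriangulationIn H W G' → ¬ G' < G

/-- `𝔗(H_W)`, the set of minimal triangulations. -/
def minTris (H : SimpleGraph V) (W : Finset V) : Set (SimpleGraph V) :=
  {G | IsMinTriIn H W G}

/-- The induced subgraph on `W`, kept as a graph on the ambient vertex type. -/
def inducedSG (G : SimpleGraph V) (W : Finset V) : SimpleGraph V where
  Adj a b := G.Adj a b ∧ a ∈ W ∧ b ∈ W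
  symm := ⟨fun a b h => ⟨h.1.symm, h.2.2, h.2.1⟩⟩
  loopless := ⟨fun a h => G.loopless.irrefl a h.1⟩

/-- Maximal cliques of the subgraph induced on `W`. -/
def IsMaxCliqueIn (G : SimpleGraph V) (W K : Finset V) : Prop :=
  K ⊆ W ∧ G.IsClique (K : Set V) ∧
    ∀ K' : Finset V, K' ⊆ W → G.IsClique (K' : Set V) → K ⊆ K' → K = K'

def ReachIn (G : SimpleGraph V) (W : Finset V) (u v : V) : Prop :=
  ∃ p : G.Walk u v, WalkIn W p

/-- `S` is a `(u,v)`-separator in the subgraph induced on `W`. -/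
def SepPairIn (G : SimpleGraph V) (W S : Finset V) (u v : V) : Prop :=
  u ∈ W ∧ v ∈ W ∧ u ∉ S ∧ v ∉ S ∧
    ∀ p : G.Walk u v, WalkIn W p → ∃ s ∈ S, s ∈ p.support

/-- A clique separator of the subgraph induced on `W`. -/
def IsCliqueSepIn (G : SimpleGraph V) (W S : Finset V) : Prop :=
  S ⊆ W ∧ G.IsClique (S : Set V) ∧ ∃ u v, ReachIn G W u v ∧ SepPairIn G W S u v

/-- The subgraph induced on `W` is prime: it has no clique separator. -/
def IsPrimeIn (G : SimpleGraph V) (W : Finset V) : Prop :=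
  ¬ ∃ S, IsCliqueSepIn G W S

/-- `U` is a maximal prime component of the subgraph induced on `W`. -/
def IsMpCompIn (G : SimpleGraph V) (W U : Finset V) : Prop :=
  U ⊆ W ∧ IsPrimeIn G U ∧ ∀ U', U' ⊆ W → IsPrimeIn G U' → U ⊆ U' → U = U'

/-- `S` is a minimal vertex separator of the subgraph induced on `W`. -/
def IsMinVtxSepIn (G : SimpleGraph V) (W S : Finset V) : Prop :=
  S ⊆ W ∧ ∃ u v, SepPairIn G W S u v ∧ ∀ S', S' ⊂ S → ¬ SepPairIn G W S' u v

/-- The set of clique minimal vertex separators of the subgraph induced on `W`. -/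
def cmvs (G : SimpleGraph V) (W : Finset V) : Set (Finset V) :=
  {S | G.IsClique (S : Set V) ∧ IsMinVtxSepIn G W S}

/-! ### Running intersection orderings and standard imsets -/

def unionTake (l : List (Finset V)) (i : ℕ) : Finset V :=
  (l.take i).foldr (· ∪ ·) ∅

def sepAt (l : List (Finset V)) (i : ℕ) : Finset V :=
  l.getD i ∅ ∩ unionTake l i

/-- `l` is an ordering, with the running intersection property, of the family `F`. -/
def IsRIPList (F : Finset V → Prop) (l : List (Finset V)) : Prop :=
  l.Nodup ∧ (∀ X, X ∈ l ↔ F X) ∧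
    ∀ i, 0 < i → i < l.length → ∃ k, k < i ∧ sepAt l i ⊆ l.getD k ∅

noncomputable def ripList (F : Finset V → Prop) : List (Finset V) :=
  if h : ∃ l, IsRIPList F l then h.choose else []

/-- The multiplicity `ν(S)`: the number of indices `i ≥ 1` with `S_i = S` in a
running intersection ordering of the family `F`. -/
noncomputable def nuOf (F : Finset V → Prop) (S : Finset V) : ℕ :=
  (List.range (ripList F).length).countP
    (fun i => decide (0 < i ∧ sepAt (ripList F) i = S))

/-- The standard imset of a decomposable graph (induced on `W`),
`u_G = δ_W − Σ_{K ∈ K_G} δ_K + Σ_{S ∈ S_G} ν_G(S)·δ_S`. -/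
noncomputable def uDec (G : SimpleGraph V) (W : Finset V) : Imset V :=
  deltaIm W - (∑ᶠ K ∈ {K : Finset V | IsMaxCliqueIn G W K}, deltaIm K)
    + ∑ᶠ S ∈ cmvs G W, (nuOf (IsMaxCliqueIn G W) S : ℤ) • deltaIm S

/-- The standard imset of a general undirected graph (induced on `W`). -/
noncomputable def uUG (G : SimpleGraph V) (W : Finset V) : Imset V :=
  deltaIm W - (∑ᶠ U ∈ {U : Finset V | IsMpCompIn G W U}, deltaIm U)
    + (∑ᶠ S ∈ cmvs G W, (nuOf (IsMpCompIn G W) S : ℤ) • deltaIm S)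
    + ∑ᶠ U ∈ {U : Finset V | IsMpCompIn G W U},
        ∑ᶠ G' ∈ minTris (inducedSG G U) U, uDec G' U

/-! ### Chain graphs -/

/-- A mixed graph: `Adj a b ∧ Adj b a` is an undirected edge `a — b`,
`Adj a b ∧ ¬ Adj b a` is a directed edge `a → b`. -/
structure MixedGraph (V : Type) where
  Adj : V → V → Prop
  irrefl : ∀ a, ¬ Adj a a

def MixedGraph.UndirEdge (G : MixedGraph V) (a b : V) : Prop := G.Adj a b ∧ G.Adj b a

def MixedGraph.DirEdge (G : MixedGraph V) (a b : V) : Prop := G.Adj a b ∧ ¬ G.Adj b a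

/-- A chain graph: no directed cycles (no cycle containing a directed edge). -/
def IsChainGraph (G : MixedGraph V) : Prop :=
  ∀ a b, G.DirEdge a b → ¬ Relation.ReflTransGen G.Adj b a

/-- The underlying (undirected) graph of a mixed graph. -/
def MixedGraph.underlying (G : MixedGraph V) : SimpleGraph V where
  Adj a b := a ≠ b ∧ (G.Adj a b ∨ G.Adj b a)
  symm := by
    constructor
    intro a b h
    exact ⟨h.1.symm, h.2.symm⟩
  loopless := ⟨fun a h => h.1 rfl⟩

/-- The undirected part of a mixed graph. -/
def MixedGraph.ugPart (G : MixedGraph V) : SimpleGraph V where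
  Adj a b := G.Adj a b ∧ G.Adj b a
  symm := ⟨fun a b h => ⟨h.2, h.1⟩⟩
  loopless := ⟨fun a h => G.irrefl a h.1⟩

/-- The chain component containing `v` : the connectivity component of `v`
after removing all directed edges. -/
noncomputable def chainComp (G : MixedGraph V) (v : V) : Finset V :=
  Finset.univ.filter fun u => (MixedGraph.ugPart G).Reachable v u

/-- The set of chain components. -/
noncomputable def chainComps (G : MixedGraph V) : Finset (Finset V) :=
  Finset.univ.image (chainComp G)

/-- The parent set of `C`: vertices outside `C` with a directed edge into `C`. -/
noncomputable def paSet (G : MixedGraph V) (C : Finset V) : Finset V :=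
  Finset.univ.filter fun a => a ∉ C ∧ ∃ b ∈ C, G.DirEdge a b

/-- The ancestral set of `K`. -/
noncomputable def anSet (G : MixedGraph V) (K : Finset V) : Finset V :=
  Finset.univ.filter fun a => ∃ k ∈ K, Relation.ReflTransGen G.Adj a k

/-- The induced sub-mixed-graph on `W` (on the ambient vertex type). -/
def inducedM (G : MixedGraph V) (W : Finset V) : MixedGraph V where
  Adj a b := G.Adj a b ∧ a ∈ W ∧ b ∈ W
  irrefl := fun a h => G.irrefl a h.1

/-- The moral graph: the underlying graph together with edges joining any two
vertices that are parents of a common chain component. -/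
noncomputable def moralG (G : MixedGraph V) : SimpleGraph V where
  Adj a b := a ≠ b ∧
    (G.Adj a b ∨ G.Adj b a ∨ ∃ C ∈ chainComps G, a ∈ paSet G C ∧ b ∈ paSet G C)
  symm := by
    constructor
    intro a b h
    refine ⟨h.1.symm, ?_⟩
    rcases h.2 with h' | h' | ⟨C, hC, ha, hb⟩
    · exact Or.inr (Or.inl h')
    · exact Or.inl h'
    · exact Or.inr (Or.inr ⟨C, hC, hb, ha⟩)
  loopless := ⟨fun a h => h.1 rfl⟩

/-- The closure graph `clo_H(C) = (H_{C ∪ pa(C)})^mor`. -/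
noncomputable def clo (G : MixedGraph V) (C : Finset V) : SimpleGraph V :=
  moralG (inducedM G (C ∪ paSet G C))

/-- The separation criterion for chain graphs:
`C` separates `A` from `B` in `(H_{an(A∪B∪C)})^mor`. -/
noncomputable def cgCI (G : MixedGraph V) (A B C : Finset V) : Prop :=
  SeparatesIn (moralG (inducedM G (anSet G (A ∪ B ∪ C)))) Finset.univ A B C

/-- Two mixed graphs are (Markov) equivalent if they induce the same independence model. -/
noncomputable def CGEquiv (G H : MixedGraph V) : Prop :=
  ∀ A B C : Finset V, DisjointTriple A B C → (cgCI G A B C ↔ cgCI H A B C)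

/-- A directed acyclic graph: all edges directed, no directed cycles. -/
def IsDAG (G : MixedGraph V) : Prop :=
  (∀ a b, G.Adj a b → ¬ G.Adj b a) ∧ IsChainGraph G

/-- A triangulation of a chain graph `H`: a chain graph containing every undirected and
every directed edge of `H` which is equivalent to some directed acyclic graph. -/
noncomputable def IsCGTri (H G : MixedGraph V) : Prop :=
  IsChainGraph G ∧
  (∀ a b, H.UndirEdge a b → G.UndirEdge a b) ∧
  (∀ a b, H.DirEdge a b → G.DirEdge a b) ∧
  ∃ D : MixedGraph V, IsDAG D ∧ CGEquiv G D

def mEdges (G : MixedGraph V) : Set (V × V) := {p | G.Adj p.1 p.2}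

/-- A minimal triangulation of the chain graph `H`: no triangulation of `H`
has a strictly smaller edge set. -/
noncomputable def IsCGMinTri (H G : MixedGraph V) : Prop :=
  IsCGTri H G ∧ ∀ G', IsCGTri H G' → ¬ mEdges G' ⊂ mEdges G

/-- The standard imset of a chain graph. -/
noncomputable def uCG (H : MixedGraph V) : Imset V :=
  deltaIm Finset.univ - deltaIm ∅ +
    ∑ C ∈ chainComps H,
      (deltaIm (paSet H C) - deltaIm (C ∪ paSet H C) + uUG (clo H C) (C ∪ paSet H C))

/-- `U ⇒ L` is a meta-arrow. -/
def MetaArrow (H : MixedGraph V) (U L : Finset V) : Prop :=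
  U ∈ chainComps H ∧ L ∈ chainComps H ∧ U ≠ L ∧ ∃ a ∈ U, ∃ b ∈ L, H.DirEdge a b

/-- The graph obtained by merging the meta-arrow `U ⇒ L`: every directed edge from `U`
to `L` is replaced by an undirected edge. -/
def mergeGraph (H : MixedGraph V) (U L : Finset V) : MixedGraph V where
  Adj x y := H.Adj x y ∨ (H.DirEdge y x ∧ y ∈ U ∧ x ∈ L)
  irrefl := fun a h => by
    rcases h with h | ⟨⟨h, _⟩, _⟩ <;> exact H.irrefl a h

/-- Feasibility of merging the meta-arrow `U ⇒ L`. -/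
def FeasibleMerge (H : MixedGraph V) (U L : Finset V) : Prop :=
  MetaArrow H U L ∧
  (MixedGraph.underlying H).IsClique ((paSet H L ∩ U : Finset V) : Set V) ∧
  ∀ b ∈ paSet H L ∩ U, paSet H L \ U ⊆ paSet H ({b} : Finset V)

private lemma ugReach_rtg {G : MixedGraph V} {a b : V}
    (h : (MixedGraph.ugPart G).Reachable a b) : Relation.ReflTransGen G.Adj a b := by
  rw [SimpleGraph.reachable_iff_reflTransGen] at h
  exact Relation.ReflTransGen.mono (fun x y hxy => hxy.1) _ _ h

private lemma mem_chainComp_iff {G : MixedGraph V} {v u : V} :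
    u ∈ chainComp G v ↔ (MixedGraph.ugPart G).Reachable v u := by
  simp [chainComp]

private lemma mem_of_reach {G : MixedGraph V} {U : Finset V} (hU : U ∈ chainComps G)
    {b x : V} (hb : b ∈ U) (h : (MixedGraph.ugPart G).Reachable b x) : x ∈ U := by
  obtain ⟨v, -, rfl⟩ := Finset.mem_image.mp hU
  exact mem_chainComp_iff.mpr ((mem_chainComp_iff.mp hb).trans h)

private lemma comps_disj {G : MixedGraph V} {U L : Finset V} (hU : U ∈ chainComps G)
    (hL : L ∈ chainComps G) (hne : U ≠ L) {a : V} (ha : a ∈ U) (ha' : a ∈ L) : False := by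
  apply hne
  obtain ⟨v, -, rfl⟩ := Finset.mem_image.mp hU
  obtain ⟨w, -, rfl⟩ := Finset.mem_image.mp hL
  have h1 := mem_chainComp_iff.mp ha
  have h2 := mem_chainComp_iff.mp ha'
  ext x
  simp only [mem_chainComp_iff]
  exact ⟨fun h => h2.trans (h1.symm.trans h), fun h => h1.trans (h2.symm.trans h)⟩

private lemma reach_induced {G : MixedGraph V} {W : Finset V} {a b : V}
    (h : (MixedGraph.ugPart (inducedM G W)).Reachable a b) :
    (MixedGraph.ugPart G).Reachable a b := by
  refine SimpleGraph.Reachable.mono ?_ h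
  intro x y hxy
  exact ⟨hxy.1.1, hxy.2.1⟩

private lemma no_dir_from_comp {H : MixedGraph V} (hH : IsChainGraph H) {U : Finset V}
    (hU : U ∈ chainComps H) {x c : V} (hx : x ∈ U) (hd : H.DirEdge x c)
    (hc : c ∈ U ∪ paSet H U) : False := by
  apply hH x c hd
  rcases Finset.mem_union.mp hc with hc | hc
  · obtain ⟨v, -, rfl⟩ := Finset.mem_image.mp hU
    exact ugReach_rtg ((mem_chainComp_iff.mp hc).symm.trans (mem_chainComp_iff.mp hx))
  · obtain ⟨-, -, u, hu, hdu⟩ := Finset.mem_filter.mp hc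
    obtain ⟨v, -, rfl⟩ := Finset.mem_image.mp hU
    exact Relation.ReflTransGen.head hdu.1
      (ugReach_rtg ((mem_chainComp_iff.mp hu).symm.trans (mem_chainComp_iff.mp hx)))

private lemma clo_adj_of_adj {G : MixedGraph V} {C : Finset V} {a b : V} (hne : a ≠ b)
    (ha : a ∈ C ∪ paSet G C) (hb : b ∈ C ∪ paSet G C)
    (h : G.Adj a b ∨ G.Adj b a) : (clo G C).Adj a b := by
  rcases h with h | h
  · exact ⟨hne, Or.inl ⟨h, ha, hb⟩⟩
  · exact ⟨hne, Or.inr (Or.inl ⟨h, hb, ha⟩)⟩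

private lemma clo_adj_of_child {G : MixedGraph V} {C : Finset V} {a b c : V} (hne : a ≠ b)
    (ha : a ∈ C ∪ paSet G C) (hb : b ∈ C ∪ paSet G C) (hc : c ∈ C ∪ paSet G C)
    (hda : G.DirEdge a c) (hdb : G.DirEdge b c)
    (hac : a ∉ chainComp (inducedM G (C ∪ paSet G C)) c)
    (hbc : b ∉ chainComp (inducedM G (C ∪ paSet G C)) c) :
    (clo G C).Adj a b := by
  refine ⟨hne, Or.inr (Or.inr ⟨chainComp (inducedM G (C ∪ paSet G C)) c, ?_, ?_, ?_⟩)⟩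
  · exact Finset.mem_image.mpr ⟨c, Finset.mem_univ c, rfl⟩
  · exact Finset.mem_filter.mpr ⟨Finset.mem_univ a, hac, c,
      mem_chainComp_iff.mpr (SimpleGraph.Reachable.refl c),
      ⟨⟨hda.1, ha, hc⟩, fun h => hda.2 h.1⟩⟩
  · exact Finset.mem_filter.mpr ⟨Finset.mem_univ b, hbc, c,
      mem_chainComp_iff.mpr (SimpleGraph.Reachable.refl c),
      ⟨⟨hdb.1, hb, hc⟩, fun h => hdb.2 h.1⟩⟩

private lemma dir_of_sub {H : MixedGraph V} {L U : Finset V}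
    (hsub : ∀ b ∈ paSet H L ∩ U, paSet H L \ U ⊆ paSet H ({b} : Finset V))
    {b y : V} (hb : b ∈ paSet H L ∩ U) (hy : y ∈ paSet H L) (hyU : y ∉ U) :
    H.DirEdge y b := by
  have h := hsub b hb (Finset.mem_sdiff.mpr ⟨hy, hyU⟩)
  obtain ⟨-, -, k, hk, hd⟩ := Finset.mem_filter.mp h
  rw [Finset.mem_singleton.mp hk] at hd
  exact hd

/-- Merging of a meta-arrow `U ⇒ L` is feasible iff `pa_H(L)` is a
clique in the closure graph `clo_H(U)`; moreover, if merging is feasible then `pa_H(L)`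
is a clique in `clo_{H'}(M)` for the merged chain component `M` of the resulting graph. -/
theorem feasible_merging_iff_parents_clique
    {V : Type} [Fintype V] [DecidableEq V] (H : MixedGraph V)
    (hH : IsChainGraph H) (U L : Finset V) (hma : MetaArrow H U L) :
    (FeasibleMerge H U L ↔ (clo H U).IsClique ((paSet H L : Finset V) : Set V)) ∧
    (FeasibleMerge H U L →
      ∀ M : Finset V, M ∈ chainComps (mergeGraph H U L) → U ∪ L ⊆ M →
        (clo (mergeGraph H U L) M).IsClique ((paSet H L : Finset V) : Set V)) := by
  obtain ⟨hU, hL, hULne, a0, ha0U, b0, hb0L, hd0⟩ := hma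
  have ha0L : a0 ∉ L := fun h => comps_disj hU hL hULne ha0U h
  have ha0pa : a0 ∈ paSet H L :=
    Finset.mem_filter.mpr ⟨Finset.mem_univ _, ha0L, b0, hb0L, hd0⟩
  have ha0K : a0 ∈ paSet H L ∩ U := Finset.mem_inter.mpr ⟨ha0pa, ha0U⟩
  constructor
  · constructor
    · -- forward: feasible → clique in clo H U
      rintro ⟨-, hKcl, hsub⟩
      rw [SimpleGraph.isClique_iff]
      intro x hx z hz hne
      replace hx := Finset.mem_coe.mp hx
      replace hz := Finset.mem_coe.mp hz
      by_cases hxU : x ∈ U <;> by_cases hzU : z ∈ U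
      · have h := (hKcl (Finset.mem_coe.mpr (Finset.mem_inter.mpr ⟨hx, hxU⟩))
          (Finset.mem_coe.mpr (Finset.mem_inter.mpr ⟨hz, hzU⟩)) hne).2
        exact clo_adj_of_adj hne (Finset.mem_union_left _ hxU)
          (Finset.mem_union_left _ hzU) h
      · have hd := dir_of_sub hsub (Finset.mem_inter.mpr ⟨hx, hxU⟩) hz hzU
        exact clo_adj_of_adj hne (Finset.mem_union_left _ hxU)
          (Finset.mem_union_right _
            (Finset.mem_filter.mpr ⟨Finset.mem_univ _, hzU, x, hxU, hd⟩))
          (Or.inr hd.1)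
      · have hd := dir_of_sub hsub (Finset.mem_inter.mpr ⟨hz, hzU⟩) hx hxU
        exact clo_adj_of_adj hne
          (Finset.mem_union_right _
            (Finset.mem_filter.mpr ⟨Finset.mem_univ _, hxU, z, hzU, hd⟩))
          (Finset.mem_union_left _ hzU) (Or.inl hd.1)
      · have hdx := dir_of_sub hsub ha0K hx hxU
        have hdz := dir_of_sub hsub ha0K hz hzU
        refine clo_adj_of_child hne
          (Finset.mem_union_right _
            (Finset.mem_filter.mpr ⟨Finset.mem_univ _, hxU, a0, ha0U, hdx⟩))
          (Finset.mem_union_right _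
            (Finset.mem_filter.mpr ⟨Finset.mem_univ _, hzU, a0, ha0U, hdz⟩))
          (Finset.mem_union_left _ ha0U) hdx hdz ?_ ?_
        · intro hmem
          exact hxU (mem_of_reach hU ha0U (reach_induced (mem_chainComp_iff.mp hmem)))
        · intro hmem
          exact hzU (mem_of_reach hU ha0U (reach_induced (mem_chainComp_iff.mp hmem)))
    · -- backward: clique in clo H U → feasible
      intro hcl
      rw [SimpleGraph.isClique_iff] at hcl
      refine ⟨⟨hU, hL, hULne, a0, ha0U, b0, hb0L, hd0⟩, ?_, ?_⟩
      · rw [SimpleGraph.isClique_iff]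
        intro x hx z hz hne
        obtain ⟨hxL, hxU⟩ := Finset.mem_inter.mp (Finset.mem_coe.mp hx)
        obtain ⟨hzL, hzU⟩ := Finset.mem_inter.mp (Finset.mem_coe.mp hz)
        obtain ⟨-, h⟩ := hcl (Finset.mem_coe.mpr hxL) (Finset.mem_coe.mpr hzL) hne
        rcases h with h | h | ⟨C, hC, hxp, hzp⟩
        · exact ⟨hne, Or.inl h.1⟩
        · exact ⟨hne, Or.inr h.1⟩
        · obtain ⟨-, -, c, hcC, hdc⟩ := Finset.mem_filter.mp hxp
          exact (no_dir_from_comp hH hU hxU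
            ⟨hdc.1.1, fun h' => hdc.2 ⟨h', hdc.1.2.2, hdc.1.2.1⟩⟩ hdc.1.2.2).elim
      · intro b hb y hy
        obtain ⟨hbL, hbU⟩ := Finset.mem_inter.mp hb
        obtain ⟨hyL, hyU⟩ := Finset.mem_sdiff.mp hy
        have hne : y ≠ b := fun h => hyU (h ▸ hbU)
        have hund : ¬ (H.Adj b y ∧ H.Adj y b) := fun h =>
          hyU (mem_of_reach hU hbU
            (SimpleGraph.Adj.reachable (⟨h.1, h.2⟩ : (MixedGraph.ugPart H).Adj b y)))
        obtain ⟨-, h⟩ := hcl (Finset.mem_coe.mpr hyL) (Finset.mem_coe.mpr hbL) hne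
        rcases h with h | h | ⟨C, hC, hyp, hbp⟩
        · exact Finset.mem_filter.mpr ⟨Finset.mem_univ _, Finset.notMem_singleton.mpr hne,
            b, Finset.mem_singleton_self b, ⟨h.1, fun h' => hund ⟨h', h.1⟩⟩⟩
        · by_cases hyb : H.Adj y b
          · exact Finset.mem_filter.mpr ⟨Finset.mem_univ _, Finset.notMem_singleton.mpr hne,
              b, Finset.mem_singleton_self b, ⟨hyb, fun h' => hund ⟨h', hyb⟩⟩⟩
          · exact (no_dir_from_comp hH hU hbU ⟨h.1, hyb⟩ h.2.2).elim
        · obtain ⟨-, -, c, hcC, hdc⟩ := Finset.mem_filter.mp hbp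
          exact (no_dir_from_comp hH hU hbU
            ⟨hdc.1.1, fun h' => hdc.2 ⟨h', hdc.1.2.2, hdc.1.2.1⟩⟩ hdc.1.2.2).elim
  · -- moreover
    rintro ⟨-, hKcl, hsub⟩ M hM hMsup
    have hma0M : a0 ∈ M := hMsup (Finset.mem_union_left _ ha0U)
    have hstep : ∀ p q, p ∈ U ∪ L →
        (MixedGraph.ugPart (mergeGraph H U L)).Adj p q → q ∈ U ∪ L := by
      rintro p q hp ⟨h1, h2⟩
      rcases h1 with h1 | h1
      · rcases h2 with h2 | h2
        · rcases Finset.mem_union.mp hp with hp' | hp'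
          · exact Finset.mem_union_left _ (mem_of_reach hU hp'
              (SimpleGraph.Adj.reachable (⟨h1, h2⟩ : (MixedGraph.ugPart H).Adj p q)))
          · exact Finset.mem_union_right _ (mem_of_reach hL hp'
              (SimpleGraph.Adj.reachable (⟨h1, h2⟩ : (MixedGraph.ugPart H).Adj p q)))
        · exact Finset.mem_union_right _ h2.2.2
      · exact Finset.mem_union_left _ h1.2.1
    have hMsub : M ⊆ U ∪ L := by
      obtain ⟨w, -, rfl⟩ := Finset.mem_image.mp hM
      intro x hx
      have hr : (MixedGraph.ugPart (mergeGraph H U L)).Reachable a0 x :=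
        (mem_chainComp_iff.mp hma0M).symm.trans (mem_chainComp_iff.mp hx)
      rw [SimpleGraph.reachable_iff_reflTransGen] at hr
      clear hx
      induction hr with
      | refl => exact Finset.mem_union_left _ ha0U
      | tail hab hbc ih => exact hstep _ _ ih hbc
    have hdir' : ∀ {y}, y ∈ paSet H L → y ∉ U → (mergeGraph H U L).DirEdge y a0 := by
      intro y hy hyU
      have hd := dir_of_sub hsub ha0K hy hyU
      exact ⟨Or.inl hd.1, fun h => h.elim hd.2 (fun h' => hyU h'.2.1)⟩
    have hpaM : ∀ {y}, y ∈ paSet H L → y ∉ U → y ∈ paSet (mergeGraph H U L) M := by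
      intro y hy hyU
      have hyL : y ∉ L := (Finset.mem_filter.mp hy).2.1
      have hyM : y ∉ M := fun h => (Finset.mem_union.mp (hMsub h)).elim hyU hyL
      exact Finset.mem_filter.mpr ⟨Finset.mem_univ _, hyM, a0, hma0M, hdir' hy hyU⟩
    rw [SimpleGraph.isClique_iff]
    intro x hx z hz hne
    replace hx := Finset.mem_coe.mp hx
    replace hz := Finset.mem_coe.mp hz
    by_cases hxU : x ∈ U <;> by_cases hzU : z ∈ U
    · have h := (hKcl (Finset.mem_coe.mpr (Finset.mem_inter.mpr ⟨hx, hxU⟩))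
        (Finset.mem_coe.mpr (Finset.mem_inter.mpr ⟨hz, hzU⟩)) hne).2
      exact clo_adj_of_adj hne
        (Finset.mem_union_left _ (hMsup (Finset.mem_union_left _ hxU)))
        (Finset.mem_union_left _ (hMsup (Finset.mem_union_left _ hzU)))
        (h.imp Or.inl Or.inl)
    · have hd := dir_of_sub hsub (Finset.mem_inter.mpr ⟨hx, hxU⟩) hz hzU
      exact clo_adj_of_adj hne
        (Finset.mem_union_left _ (hMsup (Finset.mem_union_left _ hxU)))
        (Finset.mem_union_right _ (hpaM hz hzU))
        (Or.inr (Or.inl hd.1))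
    · have hd := dir_of_sub hsub (Finset.mem_inter.mpr ⟨hz, hzU⟩) hx hxU
      exact clo_adj_of_adj hne
        (Finset.mem_union_right _ (hpaM hx hxU))
        (Finset.mem_union_left _ (hMsup (Finset.mem_union_left _ hzU)))
        (Or.inl (Or.inl hd.1))
    · refine clo_adj_of_child hne
        (Finset.mem_union_right _ (hpaM hx hxU))
        (Finset.mem_union_right _ (hpaM hz hzU))
        (Finset.mem_union_left _ hma0M) (hdir' hx hxU) (hdir' hz hzU) ?_ ?_
      · intro hmem
        have hxM : x ∈ M := mem_of_reach hM hma0M (reach_induced (mem_chainComp_iff.mp hmem))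
        exact (Finset.mem_union.mp (hMsub hxM)).elim hxU
          (fun h => (Finset.mem_filter.mp hx).2.1 h)
      · intro hmem
        have hzM : z ∈ M := mem_of_reach hM hma0M (reach_induced (mem_chainComp_iff.mp hmem))
        exact (Finset.mem_union.mp (hMsub hzM)).elim hzU
          (fun h => (Finset.mem_filter.mp hz).2.1 h)
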